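/- The function f(x) = (e^{θx} − θx − 1)/x^2 for x ≠ 0, extended by f(0) = θ^2/2, is monotonically increasing on ℝ for any fixed θ > 0. Consequently, e^{θx} ≤ f(1)x^2 + 1 + θx for all x ≤ 1. -/

import Mathlib

open Real Set

/-- derivative of `h(t) = (t-1)e^t + 1` positivity -/
lemma aux_hder (t : ℝ) (ht : t ≠ 0) : 0 < (t - 1) * Real.exp t + 1 := by
  rcases le_or_gt 1 t with h | h
  · nlinarith [Real.exp_pos t]
  · have h2 := Real.add_one_lt_exp (neg_ne_zero.mpr ht)
    have h3 : Real.exp (-t) * Real.exp t = 1 := by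
      rw [← Real.exp_add]; simp
    nlinarith [Real.exp_pos t]

lemma aux_H_deriv (t : ℝ) :
    HasDerivAt (fun t : ℝ => (t - 2) * Real.exp t + t + 2)
      ((t - 1) * Real.exp t + 1) t := by
  have h1 := ((hasDerivAt_id t).sub_const 2).mul (Real.hasDerivAt_exp t)
  have h2 := (h1.add (hasDerivAt_id t)).add_const 2
  exact h2.congr_deriv (by simp only [id_eq]; ring)

lemma aux_key (t : ℝ) (ht : t ≠ 0) : 0 < ((t - 2) * Real.exp t + t + 2) * t := by
  set H : ℝ → ℝ := fun t => (t - 2) * Real.exp t + t + 2 with hH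
  have hcont : Continuous H := by
    fun_prop
  have hH0 : H 0 = 0 := by simp [hH]
  rcases ht.lt_or_gt with h | h
  · have hmono : StrictMonoOn H (Iic 0) := by
      apply strictMonoOn_of_deriv_pos (convex_Iic 0) hcont.continuousOn
      intro x hx
      rw [interior_Iic] at hx
      rw [(aux_H_deriv x).deriv]
      exact aux_hder x hx.ne
    have h2 := hmono (Set.mem_Iic.mpr h.le) Set.self_mem_Iic h
    rw [hH0] at h2
    have h3 : (t - 2) * Real.exp t + t + 2 < 0 := h2
    exact mul_pos_of_neg_of_neg h3 h
  · have hmono : StrictMonoOn H (Ici 0) := by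
      apply strictMonoOn_of_deriv_pos (convex_Ici 0) hcont.continuousOn
      intro x hx
      rw [interior_Ici] at hx
      rw [(aux_H_deriv x).deriv]
      exact aux_hder x hx.ne'
    have h2 := hmono Set.self_mem_Ici (Set.mem_Ici.mpr h.le) h
    rw [hH0] at h2
    have h3 : 0 < (t - 2) * Real.exp t + t + 2 := h2
    exact mul_pos h3 h

/-- `e^t ≤ 1 + t + t²/2` for `t ≤ 0`. -/
lemma aux_exp_le_quadratic {t : ℝ} (ht : t ≤ 0) : Real.exp t ≤ 1 + t + t ^ 2 / 2 := by
  set s := -t with hs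
  clear_value s
  have hs0 : 0 ≤ s := by rw [hs]; linarith
  have hsum := Real.sum_le_exp_of_nonneg hs0 4
  have hsum' : 1 + s + s ^ 2 / 2 + s ^ 3 / 6 ≤ Real.exp s := by
    have : ∑ i ∈ Finset.range 4, s ^ i / (Nat.factorial i) = 1 + s + s ^ 2 / 2 + s ^ 3 / 6 := by
      norm_num [Finset.sum_range_succ, Nat.factorial]
    linarith [this ▸ hsum]
  have hexp : Real.exp t = 1 / Real.exp s := by
    rw [hs, Real.exp_neg]
    simp [one_div]
  rw [hexp, div_le_iff₀ (Real.exp_pos s)]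
  have h1 : t = -s := by rw [hs]; ring
  have hq : (0:ℝ) ≤ 1 - s + s ^ 2 / 2 := by nlinarith [sq_nonneg (s - 1)]
  have hprod := mul_le_mul_of_nonneg_left hsum' hq
  have hpoly : (1:ℝ) ≤ (1 - s + s ^ 2 / 2) * (1 + s + s ^ 2 / 2 + s ^ 3 / 6) := by
    nlinarith [pow_nonneg hs0 3, pow_nonneg hs0 4, pow_nonneg hs0 5]
  have h2 : (1:ℝ) + t + t ^ 2 / 2 = 1 - s + s ^ 2 / 2 := by rw [h1]; ring
  rw [h2]
  exact hpoly.trans hprod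

theorem monotone_exp_quadratic_ratio (θ : ℝ) (hθ : 0 < θ) (f : ℝ → ℝ)
    (hf : ∀ x, f x = if x = 0 then θ ^ 2 / 2 else (Real.exp (θ * x) - θ * x - 1) / x ^ 2) :
    Monotone f ∧ ∀ x ≤ (1 : ℝ), Real.exp (θ * x) ≤ f 1 * x ^ 2 + 1 + θ * x := by
  -- derivative of f at x ≠ 0
  have hderiv : ∀ x : ℝ, x ≠ 0 → HasDerivAt f
      (((Real.exp (θ * x) * θ - θ) * x ^ 2 - (Real.exp (θ * x) - θ * x - 1) * (2 * x)) / (x ^ 2) ^ 2) x := by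
    intro x hx
    have hnum : HasDerivAt (fun y : ℝ => Real.exp (θ * y) - θ * y - 1)
        (Real.exp (θ * x) * θ - θ) x := by
      have h1 : HasDerivAt (fun y : ℝ => θ * y) θ x := by
        simpa using (hasDerivAt_id x).const_mul θ
      exact (h1.exp.sub h1).sub_const 1
    have hden : HasDerivAt (fun y : ℝ => y ^ 2) (2 * x) x := by
      simpa using hasDerivAt_pow 2 x
    have hx2 : x ^ 2 ≠ 0 := pow_ne_zero 2 hx
    have hg := hnum.div hden hx2
    apply hg.congr_of_eventuallyEq
    filter_upwards [isOpen_compl_singleton.mem_nhds (by simpa using hx : x ∈ ({0} : Set ℝ)ᶜ)] with y hy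
    rw [hf y, if_neg (by simpa using hy)]
    rfl
  -- the derivative is positive for x ≠ 0
  have hDpos : ∀ x : ℝ, x ≠ 0 →
      0 < ((Real.exp (θ * x) * θ - θ) * x ^ 2 - (Real.exp (θ * x) - θ * x - 1) * (2 * x)) / (x ^ 2) ^ 2 := by
    intro x hx
    have ht : θ * x ≠ 0 := mul_ne_zero hθ.ne' hx
    have hkey := aux_key (θ * x) ht
    apply div_pos _ (by positivity)
    nlinarith [hkey, mul_pos hθ hθ]
  -- strict monotonicity on positive and negative half-lines
  have hmonoPos : StrictMonoOn f (Ioi 0) := by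
    apply strictMonoOn_of_deriv_pos (convex_Ioi 0)
    · exact fun x hx => ((hderiv x (ne_of_gt hx)).continuousAt).continuousWithinAt
    · intro x hx
      rw [interior_Ioi] at hx
      rw [(hderiv x (ne_of_gt hx)).deriv]
      exact hDpos x (ne_of_gt hx)
  have hmonoNeg : StrictMonoOn f (Iio 0) := by
    apply strictMonoOn_of_deriv_pos (convex_Iio 0)
    · exact fun x hx => ((hderiv x (ne_of_lt hx)).continuousAt).continuousWithinAt
    · intro x hx
      rw [interior_Iio] at hx
      rw [(hderiv x (ne_of_lt hx)).deriv]
      exact hDpos x (ne_of_lt hx)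
  have hf0 : f 0 = θ ^ 2 / 2 := by rw [hf 0]; simp
  -- f x ≤ θ²/2 for x < 0
  have hL1 : ∀ x < (0:ℝ), f x ≤ θ ^ 2 / 2 := by
    intro x hx
    rw [hf x, if_neg (ne_of_lt hx)]
    rw [div_le_iff₀ (pow_two_pos_of_ne_zero (ne_of_lt hx) : (0:ℝ) < x ^ 2)]
    have ht : θ * x ≤ 0 := by nlinarith
    have := aux_exp_le_quadratic ht
    nlinarith
  -- θ²/2 ≤ f x for x > 0
  have hL2 : ∀ x > (0:ℝ), θ ^ 2 / 2 ≤ f x := by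
    intro x hx
    rw [hf x, if_neg (ne_of_gt hx)]
    rw [le_div_iff₀ (by positivity : (0:ℝ) < x ^ 2)]
    have ht : 0 ≤ θ * x := by positivity
    have := Real.quadratic_le_exp_of_nonneg ht
    nlinarith
  have hmono : Monotone f := by
    intro a b hab
    rcases eq_or_lt_of_le hab with rfl | hab
    · exact le_rfl
    · rcases lt_trichotomy a 0 with ha | ha | ha
      · rcases lt_trichotomy b 0 with hb | hb | hb
        · exact (hmonoNeg ha hb hab).le
        · rw [hb, hf0]; exact hL1 a ha
        · calc f a ≤ θ ^ 2 / 2 := hL1 a ha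
            _ ≤ f b := hL2 b hb
      · have hb : 0 < b := by rw [ha] at hab; exact hab
        rw [ha, hf0]; exact hL2 b hb
      · exact (hmonoPos ha (lt_trans ha hab) hab).le
  refine ⟨hmono, fun x hx => ?_⟩
  rcases eq_or_ne x 0 with rfl | hx0
  · simp
  · have h1 : f x ≤ f 1 := hmono hx
    rw [hf x, if_neg hx0] at h1
    rw [div_le_iff₀ (pow_two_pos_of_ne_zero hx0 : (0:ℝ) < x ^ 2)] at h1
    linarith
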